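/- Under the convergence condition, for every z ∈ ℂ₀^λ and every k ∈ ℕ₀ one has ∑_{n=0}^{∞} |P_n^{(k)}(z)| < ∞ and ∑_{n=−∞}^{0} |(d^k/dz^k)(1/(w_{n−1} P_{n−1}(z)))| < ∞, where the superscript (k) denotes the k-th complex derivative in z. -/

import Mathlib

open Filter Topology
open scoped Classical

noncomputable section

namespace Jacobi

/-- Admissible index tuples `k : Fin (m+1) → ℤ` with gaps `≥ 2` (an `(m+1)`-tuple,
corresponding to the `m`-th summand, `m ≥ 1`, in the paper). -/
def Tup (m : ℕ) : Type :=
  {k : Fin (m + 1) → ℤ // ∀ j : Fin m, k j.castSucc + 2 ≤ k j.succ}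

/-- The function `𝔉` of Stampach--Stovicek. -/
def FF (x : ℤ → ℂ) : ℂ :=
  1 + ∑' m : ℕ, (-1 : ℂ) ^ (m + 1) * ∑' k : Tup m, ∏ j, x (k.1 j) * x (k.1 j + 1)

/-- `𝔉` applied to the restriction of `x` to `s` (extension by zeros). -/
def FFon (s : Set ℤ) (x : ℤ → ℂ) : ℂ := FF (s.indicator x)

/-- `ℂ₀^λ`. -/
def C0 (lam : ℤ → ℂ) : Set ℂ := (closure (Set.range lam))ᶜ

/-- `der λ`: the set of (finite) accumulation points of the sequence `λ`. -/
def der (lam : ℤ → ℂ) : Set ℂ := {z | MapClusterPt z Filter.cofinite lam}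

/-- The basic convergence condition (at one point of `ℂ₀^λ`). -/
def ConvCond (lam w : ℤ → ℂ) : Prop :=
  ∃ z₀ ∈ C0 lam, Summable fun n : ℤ => ‖w n ^ 2 / ((lam n - z₀) * (lam (n + 1) - z₀))‖

/-- The characteristic function `F_𝒥`. -/
def charF (lam γ : ℤ → ℂ) (z : ℂ) : ℂ := FF fun n => γ n ^ 2 / (z - lam n)

/-- `r(z)`. -/
def rz (lam : ℤ → ℂ) (z : ℂ) : ℕ := Set.ncard {n : ℤ | lam n = z}

/-- `r₊(z)`. -/
def rp (lam : ℤ → ℂ) (z : ℂ) : ℕ := Set.ncard {n : ℤ | 0 < n ∧ lam n = z}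

/-- `r₋(z)`. -/
def rm (lam : ℤ → ℂ) (z : ℂ) : ℕ := Set.ncard {n : ℤ | n ≤ 0 ∧ lam n = z}

/-- `𝒫_n(z)`. -/
def Pz (lam w : ℤ → ℂ) (z : ℂ) (n : ℤ) : ℂ :=
  if 0 ≤ n then ∏ k ∈ Finset.Icc (1 : ℤ) n, w (k - 1) / (z - lam k)
  else ∏ k ∈ Finset.Icc (n + 1) (0 : ℤ), (z - lam k) / w (k - 1)

/-- `𝔉((γ_k²/(λ_k − z))_{k=n}^{∞})`. -/
def Fplus (lam γ : ℤ → ℂ) (z : ℂ) (n : ℤ) : ℂ :=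
  FFon {k | n ≤ k} fun k => γ k ^ 2 / (lam k - z)

/-- `𝔉((γ_k²/(λ_k − z))_{k=−∞}^{n})`. -/
def Fminus (lam γ : ℤ → ℂ) (z : ℂ) (n : ℤ) : ℂ :=
  FFon {k | k ≤ n} fun k => γ k ^ 2 / (lam k - z)

/-- `f_n(z)` for `z ∈ ℂ₀^λ`. -/
def fSol₀ (lam w γ : ℤ → ℂ) (z : ℂ) (n : ℤ) : ℂ :=
  Pz lam w z n * Fplus lam γ z (n + 1)

/-- `g_n(z)` for `z ∈ ℂ₀^λ`. -/
def gSol₀ (lam w γ : ℤ → ℂ) (z : ℂ) (n : ℤ) : ℂ :=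
  (w (n - 1) * Pz lam w z (n - 1))⁻¹ * Fminus lam γ z (n - 1)

/-- `f_n(z)` extended to `ℂ ∖ der λ` by the limit formula. -/
def fSol (lam w γ : ℤ → ℂ) (z : ℂ) (n : ℤ) : ℂ :=
  if z ∈ C0 lam then fSol₀ lam w γ z n
  else limUnder (𝓝[C0 lam] z) fun u => (u - z) ^ rp lam z * fSol₀ lam w γ u n

/-- `g_n(z)` extended to `ℂ ∖ der λ` by the limit formula. -/
def gSol (lam w γ : ℤ → ℂ) (z : ℂ) (n : ℤ) : ℂ :=
  if z ∈ C0 lam then gSol₀ lam w γ z n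
  else limUnder (𝓝[C0 lam] z) fun u => (u - z) ^ rm lam z * gSol₀ lam w γ u n

/-- The extended zero set `𝔷(𝒥)` of the characteristic function. -/
def Zset (lam w γ : ℤ → ℂ) : Set ℂ :=
  {z | z ∉ der lam ∧
    Tendsto (fun u => (u - z) ^ rz lam z * charF lam γ u) (𝓝[C0 lam] z) (𝓝 0)}

/-- The Hilbert space `ℓ²(ℤ)`. -/
abbrev ℓ2 : Type := lp (fun _ : ℤ => ℂ) 2

/-- The formal Jacobi matrix acting on sequences. -/
def Jop (lam w : ℤ → ℂ) (u : ℤ → ℂ) : ℤ → ℂ := fun n =>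
  w (n - 1) * u (n - 1) + lam n * u n + w n * u (n + 1)

lemma Jop_add (lam w : ℤ → ℂ) (u v : ℤ → ℂ) :
    Jop lam w (u + v) = Jop lam w u + Jop lam w v := by
  funext n; simp [Jop]; ring

lemma Jop_smul (lam w : ℤ → ℂ) (c : ℂ) (u : ℤ → ℂ) :
    Jop lam w (c • u) = c • Jop lam w u := by
  funext n; simp [Jop]; ring

/-- The domain of the maximal operator. -/
def JmaxDom (lam w : ℤ → ℂ) : Submodule ℂ ℓ2 where
  carrier := {x | Memℓp (Jop lam w ⇑x) 2}
  add_mem' := by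
    intro x y hx hy
    show Memℓp (Jop lam w ⇑(x + y)) 2
    rw [lp.coeFn_add, Jop_add]
    exact hx.add hy
  zero_mem' := by
    show Memℓp (Jop lam w ⇑(0 : ℓ2)) 2
    have h0 : Jop lam w ⇑(0 : ℓ2) = 0 := by
      funext n; simp [Jop, lp.coeFn_zero]
    rw [h0]
    exact zero_memℓp
  smul_mem' := by
    intro c x hx
    show Memℓp (Jop lam w ⇑(c • x)) 2
    rw [lp.coeFn_smul, Jop_smul]
    exact hx.const_smul c

/-- The maximal operator `J_max` as a partially defined linear operator on `ℓ²(ℤ)`. -/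
def Jmax (lam w : ℤ → ℂ) : ℓ2 →ₗ.[ℂ] ℓ2 where
  domain := JmaxDom lam w
  toFun :=
    { toFun := fun x => (⟨Jop lam w ⇑(x : ℓ2), x.2⟩ : ℓ2)
      map_add' := by
        intro x y
        apply lp.ext
        rw [lp.coeFn_add]
        show Jop lam w ⇑((x : ℓ2) + (y : ℓ2)) = Jop lam w ⇑(x : ℓ2) + Jop lam w ⇑(y : ℓ2)
        rw [lp.coeFn_add, Jop_add]
      map_smul' := by
        intro c x
        apply lp.ext
        rw [lp.coeFn_smul]
        show Jop lam w ⇑(c • (x : ℓ2)) = c • Jop lam w ⇑(x : ℓ2)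
        rw [lp.coeFn_smul, Jop_smul] }

/-- The standard basis vector `e n` in `ℓ²(ℤ)`. -/
def eVec (n : ℤ) : ℓ2 := lp.single 2 n (1 : ℂ)

/-- The span of the standard basis vectors. -/
def stdSpan : Submodule ℂ ℓ2 := Submodule.span ℂ (Set.range eVec)

/-- The minimal operator `J_min`: the closure of the restriction of `𝒥` to the span of the
standard basis. -/
def Jmin (lam w : ℤ → ℂ) : ℓ2 →ₗ.[ℂ] ℓ2 :=
  ((Jmax lam w).domRestrict stdSpan).closure

/-- `z` is an eigenvalue of the partially defined operator `T`. -/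
def IsEV (T : ℓ2 →ₗ.[ℂ] ℓ2) (z : ℂ) : Prop :=
  ∃ x : T.domain, (x : ℓ2) ≠ 0 ∧ T x = z • (x : ℓ2)

/-- `z` belongs to the resolvent set of `T`: `T - z` is a bijection of `Dom T` onto `ℓ²(ℤ)`
with bounded (continuous linear) inverse. -/
def InRes (T : ℓ2 →ₗ.[ℂ] ℓ2) (z : ℂ) : Prop :=
  ∃ R : ℓ2 →L[ℂ] ℓ2,
    (∀ x : T.domain, R (T x - z • (x : ℓ2)) = x) ∧
    ∀ y : ℓ2, ∃ hy : R y ∈ T.domain, T ⟨R y, hy⟩ - z • (R y) = y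

/-- The spectrum of a partially defined operator. -/
def Spec (T : ℓ2 →ₗ.[ℂ] ℓ2) : Set ℂ := {z | ¬ InRes T z}

/-- `Ker (T - z)^n`. -/
def iterKer (T : ℓ2 →ₗ.[ℂ] ℓ2) (z : ℂ) : ℕ → Set ℓ2
  | 0 => {0}
  | n + 1 => {x | ∃ hx : x ∈ T.domain, ((T ⟨x, hx⟩ : ℓ2) - z • x) ∈ iterKer T z n}

/-- The set of generalized eigenvectors of `T` at `z`. -/
def genEig (T : ℓ2 →ₗ.[ℂ] ℓ2) (z : ℂ) : Set ℓ2 :=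
  {x | ∃ n : ℕ, x ∈ iterKer T z n}

/-- `Φ_p^+`. -/
def PhiP (lam : ℤ → ℂ) (p : ℕ) (z : ℂ) : ℂ :=
  ∏' n : ℕ, ((1 - lam ((n : ℤ) + 1) / z) *
    Complex.exp (∑ j ∈ Finset.Icc 1 (p - 1), (lam ((n : ℤ) + 1) / z) ^ j / (j : ℂ)))

/-- `Φ_p^-`. -/
def PhiM (lam : ℤ → ℂ) (p : ℕ) (z : ℂ) : ℂ :=
  ∏' n : ℕ, ((1 - lam (-(n : ℤ)) / z) *
    Complex.exp (∑ j ∈ Finset.Icc 1 (p - 1), (lam (-(n : ℤ)) / z) ^ j / (j : ℂ)))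

/-- `Ψ_p^+`. -/
def PsiP (lam : ℤ → ℂ) (p : ℕ) (z : ℂ) : ℂ :=
  ∏' n : ℕ, ((1 - z / lam ((n : ℤ) + 1)) *
    Complex.exp (∑ j ∈ Finset.Icc 1 (p - 1), (z / lam ((n : ℤ) + 1)) ^ j / (j : ℂ)))

/-- `Ψ_p^-`. -/
def PsiM (lam : ℤ → ℂ) (p : ℕ) (z : ℂ) : ℂ :=
  ∏' n : ℕ, ((1 - z / lam (-(n : ℤ))) *
    Complex.exp (∑ j ∈ Finset.Icc 1 (p - 1), (z / lam (-(n : ℤ))) ^ j / (j : ℂ)))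

end Jacobi

lemma aux_core {a b c C : ℝ} (ha : 0 ≤ a) (hb : 0 < b) (hc : 0 < c) (h : c ≤ C * b) :
    (a / b) ^ 2 * c ≤ C ^ 2 * (a ^ 2 / c) := by
  rw [div_pow, div_mul_eq_mul_div, mul_div_assoc', div_le_div_iff₀ (by positivity) hc]
  nlinarith [mul_le_mul_of_nonneg_left (mul_self_le_mul_self hc.le h) (sq_nonneg a)]

lemma aux_le_sqrt {x y : ℝ} (hx : 0 ≤ x) (h : x ^ 2 ≤ y) : x ≤ Real.sqrt y := by
  have := Real.sqrt_le_sqrt h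
  rwa [Real.sqrt_sq hx] at this

lemma aux_cauchy_bound {f : ℂ → ℂ} {c : ℂ} {R M : ℝ} (hR : 0 < R)
    (hf : DifferentiableOn ℂ f (Metric.closedBall c R))
    (hM : ∀ u ∈ Metric.closedBall c R, ‖f u‖ ≤ M) (k : ℕ) :
    ‖iteratedDeriv k f c‖ ≤ (k.factorial : ℝ) * M * R⁻¹ ^ k := by
  lift R to NNReal using hR.le with Rn
  have hRn : (0 : NNReal) < Rn := by exact_mod_cast hR
  have h := hf.hasFPowerSeriesOnBall hRn
  have hM0 : 0 ≤ M := le_trans (norm_nonneg _) (hM c (Metric.mem_closedBall_self (by positivity)))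
  have h1 : iteratedDeriv k f c = k.factorial • (cauchyPowerSeries f c Rn k fun _ => (1 : ℂ)) := by
    rw [iteratedDeriv_eq_iteratedFDeriv, ← h.factorial_smul 1 k]
  rw [h1, nsmul_eq_mul, norm_mul, Complex.norm_natCast]
  have h2 : ‖cauchyPowerSeries f c Rn k fun _ => (1 : ℂ)‖ ≤ ‖cauchyPowerSeries f c Rn k‖ := by
    simpa using (cauchyPowerSeries f c Rn k).le_opNorm fun _ => (1 : ℂ)
  have hI : (∫ θ in (0 : ℝ)..2 * Real.pi, ‖f (circleMap c Rn θ)‖) ≤ M * (2 * Real.pi) := by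
    have hb : ∀ x ∈ Set.uIoc (0 : ℝ) (2 * Real.pi), ‖‖f (circleMap c Rn x)‖‖ ≤ M := by
      intro x _
      rw [norm_norm]
      exact hM _ (Metric.sphere_subset_closedBall (circleMap_mem_sphere c Rn.coe_nonneg x))
    calc (∫ θ in (0 : ℝ)..2 * Real.pi, ‖f (circleMap c Rn θ)‖)
        ≤ ‖∫ θ in (0 : ℝ)..2 * Real.pi, ‖f (circleMap c Rn θ)‖‖ := le_abs_self _
      _ ≤ M * |2 * Real.pi - 0| := intervalIntegral.norm_integral_le_of_norm_le_const hb
      _ = M * (2 * Real.pi) := by rw [sub_zero, abs_of_pos Real.two_pi_pos]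
  have h3 : ‖cauchyPowerSeries f c Rn k‖ ≤ M * ((Rn : ℝ))⁻¹ ^ k := by
    refine (norm_cauchyPowerSeries_le f c Rn k).trans ?_
    rw [abs_of_nonneg Rn.coe_nonneg]
    have : (2 * Real.pi)⁻¹ * (∫ θ in (0 : ℝ)..2 * Real.pi, ‖f (circleMap c Rn θ)‖) ≤ M := by
      rw [inv_mul_le_iff₀ Real.two_pi_pos]
      calc (∫ θ in (0 : ℝ)..2 * Real.pi, ‖f (circleMap c Rn θ)‖) ≤ M * (2 * Real.pi) := hI
        _ = 2 * Real.pi * M := by ring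
    exact mul_le_mul_of_nonneg_right this (by positivity)
  calc (k.factorial : ℝ) * ‖cauchyPowerSeries f c Rn k fun _ => (1 : ℂ)‖
      ≤ (k.factorial : ℝ) * (M * ((Rn : ℝ))⁻¹ ^ k) :=
        mul_le_mul_of_nonneg_left (h2.trans h3) (by positivity)
    _ = (k.factorial : ℝ) * M * ((Rn : ℝ))⁻¹ ^ k := by ring

lemma aux_summable_iteratedDeriv {F : ℕ → ℂ → ℂ} {c : ℂ} {R : ℝ} (hR : 0 < R)
    (hdiff : ∀ n, DifferentiableOn ℂ (F n) (Metric.closedBall c R))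
    {g : ℕ → ℝ} (hg : Summable g)
    (hb : ∀ n, ∀ u ∈ Metric.closedBall c R, ‖F n u‖ ≤ g n) (k : ℕ) :
    Summable fun n => ‖iteratedDeriv k (F n) c‖ := by
  apply Summable.of_nonneg_of_le (fun n => norm_nonneg _)
    (fun n => aux_cauchy_bound hR (hdiff n) (hb n) k)
  exact (hg.mul_left ((k.factorial : ℝ) * R⁻¹ ^ k)).congr fun n => by ring

lemma aux_summable_sqrt_prod {K : ℝ} (hK : 0 ≤ K) {s : ℕ → ℝ} (hs0 : ∀ n, 0 ≤ s n)
    (hst : Tendsto s atTop (𝓝 0)) :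
    Summable fun n => Real.sqrt (K * ∏ k ∈ Finset.range n, s k) := by
  have hprod : ∀ n, 0 ≤ ∏ k ∈ Finset.range n, s k :=
    fun n => Finset.prod_nonneg fun k _ => hs0 k
  have hsq : Tendsto (fun n => Real.sqrt (s n)) atTop (𝓝 0) := by
    have := (Real.continuous_sqrt.tendsto 0).comp hst
    simpa [Function.comp_def] using this
  have hev : ∀ᶠ n in atTop, Real.sqrt (s n) ≤ 1 / 2 := by
    filter_upwards [hsq.eventually_lt_const (by norm_num : (0:ℝ) < 1/2)] with n hn
    exact hn.le
  apply summable_of_ratio_norm_eventually_le (r := 1 / 2) (by norm_num)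
  filter_upwards [hev] with n hn
  rw [Real.norm_eq_abs, Real.norm_eq_abs, abs_of_nonneg (Real.sqrt_nonneg _),
    abs_of_nonneg (Real.sqrt_nonneg _)]
  have hsucc : Real.sqrt (K * ∏ k ∈ Finset.range (n + 1), s k)
      = Real.sqrt (K * ∏ k ∈ Finset.range n, s k) * Real.sqrt (s n) := by
    rw [Finset.prod_range_succ, ← mul_assoc, Real.sqrt_mul (mul_nonneg hK (hprod n))]
  rw [hsucc]
  calc Real.sqrt (K * ∏ k ∈ Finset.range n, s k) * Real.sqrt (s n)
      ≤ Real.sqrt (K * ∏ k ∈ Finset.range n, s k) * (1 / 2) :=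
        mul_le_mul_of_nonneg_left hn (Real.sqrt_nonneg _)
    _ = 1 / 2 * Real.sqrt (K * ∏ k ∈ Finset.range n, s k) := by ring

lemma aux_cancel {P Q : ℝ} (a C2 : ℝ) (hP : P ≠ 0) (hQ : Q ≠ 0) :
    C2 * (a / (P * Q)) * Q = C2 * (a / P) := by
  field_simp

set_option maxHeartbeats 1000000 in
/-- summability of all `z`-derivatives of `𝒫_n(z)` at `+∞` and of
`1/(w_{n−1}𝒫_{n−1}(z))` at `−∞`, for `z ∈ ℂ₀^λ`. -/
theorem statement12 (lam w : ℤ → ℂ) (hw : ∀ n, w n ≠ 0) (hconv : Jacobi.ConvCond lam w)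
    (z : ℂ) (hz : z ∈ Jacobi.C0 lam) (k : ℕ) :
    Summable (fun n : ℕ => ‖iteratedDeriv k (fun u => Jacobi.Pz lam w u (n : ℤ)) z‖) ∧
    Summable (fun n : ℕ => ‖iteratedDeriv k
        (fun u => 1 / (w (-(n : ℤ) - 1) * Jacobi.Pz lam w u (-(n : ℤ) - 1))) z‖) := by
  classical
  obtain ⟨z₀, hz₀, hsum⟩ := hconv
  set t : ℤ → ℝ := fun n => ‖w n ^ 2 / ((lam n - z₀) * (lam (n + 1) - z₀))‖ with ht
  have ht0 : ∀ m : ℤ, 0 ≤ t m := fun m => norm_nonneg _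
  have hSne : (closure (Set.range lam)).Nonempty := ⟨lam 0, subset_closure ⟨0, rfl⟩⟩
  have hd : 0 < Metric.infDist z (closure (Set.range lam)) :=
    (isClosed_closure.notMem_iff_infDist_pos hSne).mp hz
  have hd₀ : 0 < Metric.infDist z₀ (closure (Set.range lam)) :=
    (isClosed_closure.notMem_iff_infDist_pos hSne).mp hz₀
  set d := Metric.infDist z (closure (Set.range lam)) with hddef
  set d₀ := Metric.infDist z₀ (closure (Set.range lam)) with hd₀def
  set R : ℝ := d / 2 with hRdef
  have hR : 0 < R := by positivity
  -- distance facts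
  have hball : ∀ u ∈ Metric.closedBall z R, ∀ m : ℤ, R ≤ ‖u - lam m‖ := by
    intro u hu m
    have h1 : d ≤ dist z (lam m) :=
      Metric.infDist_le_dist_of_mem (subset_closure ⟨m, rfl⟩)
    have h2 : dist u z ≤ R := Metric.mem_closedBall.mp hu
    have h3 : dist z (lam m) ≤ dist z u + dist u (lam m) := dist_triangle _ _ _
    have h4 : dist z u = dist u z := dist_comm _ _
    rw [← dist_eq_norm]
    have h5 : dist u (lam m) = dist u (lam m) := rfl
    rw [show R = d - d / 2 by rw [hRdef]; ring]
    linarith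
  have hune : ∀ u ∈ Metric.closedBall z R, ∀ m : ℤ, u - lam m ≠ 0 := by
    intro u hu m h
    have := hball u hu m
    rw [h, norm_zero] at this
    linarith
  have hlamz₀ : ∀ m : ℤ, d₀ ≤ ‖lam m - z₀‖ := by
    intro m
    rw [← dist_eq_norm, dist_comm]
    exact Metric.infDist_le_dist_of_mem (subset_closure ⟨m, rfl⟩)
  set C : ℝ := 1 + (R + ‖z - z₀‖) / R with hCdef
  have hC1 : (1 : ℝ) ≤ C := le_add_of_nonneg_right (by positivity)
  have hC0 : (0 : ℝ) < C := lt_of_lt_of_le one_pos hC1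
  have hkey : ∀ u ∈ Metric.closedBall z R, ∀ m : ℤ, ‖lam m - z₀‖ ≤ C * ‖u - lam m‖ := by
    intro u hu m
    rw [show ‖lam m - z₀‖ = dist (lam m) z₀ from (dist_eq_norm _ _).symm,
      show ‖u - lam m‖ = dist u (lam m) from (dist_eq_norm _ _).symm]
    have h1 : R ≤ dist u (lam m) := by rw [dist_eq_norm]; exact hball u hu m
    have h2 := dist_triangle4 (lam m) u z z₀
    have h3 : dist u z ≤ R := Metric.mem_closedBall.mp hu
    have h4 : dist (lam m) u = dist u (lam m) := dist_comm _ _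
    have key2 : C = 1 + (R + dist z z₀) / R := by rw [hCdef, dist_eq_norm]
    have h7 : ((R + dist z z₀) / R) * R ≤ ((R + dist z z₀) / R) * dist u (lam m) :=
      mul_le_mul_of_nonneg_left h1 (by positivity)
    have h6 : ((R + dist z z₀) / R) * R = R + dist z z₀ := div_mul_cancel₀ _ hR.ne'
    calc dist (lam m) z₀ ≤ dist u (lam m) + ((R + dist z z₀) / R) * dist u (lam m) := by
          linarith
      _ = C * dist u (lam m) := by rw [key2]; ring
  -- the central elementary inequality
  have hstar : ∀ u ∈ Metric.closedBall z R, ∀ m p q : ℤ,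
      ‖lam p - z₀‖ * ‖lam q - z₀‖ = ‖lam m - z₀‖ * ‖lam (m + 1) - z₀‖ →
      (‖w m‖ / ‖u - lam p‖) ^ 2 * ‖lam p - z₀‖ ≤ C ^ 2 * t m * ‖lam q - z₀‖ := by
    intro u hu m p q hpq
    have htm : t m = ‖w m‖ ^ 2 / (‖lam m - z₀‖ * ‖lam (m + 1) - z₀‖) := by
      simp only [ht]; simp [norm_div, norm_mul, norm_pow]
    rw [htm, ← hpq]
    have hp : 0 < ‖lam p - z₀‖ := lt_of_lt_of_le hd₀ (hlamz₀ p)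
    have hq : 0 < ‖lam q - z₀‖ := lt_of_lt_of_le hd₀ (hlamz₀ q)
    have hb : 0 < ‖u - lam p‖ := lt_of_lt_of_le hR (hball u hu p)
    have h1 : C ^ 2 * (‖w m‖ ^ 2 / (‖lam p - z₀‖ * ‖lam q - z₀‖)) * ‖lam q - z₀‖
        = C ^ 2 * (‖w m‖ ^ 2 / ‖lam p - z₀‖) :=
      aux_cancel _ _ hp.ne' hq.ne'
    rw [h1]
    exact aux_core (norm_nonneg _) hb hp (hkey u hu p)
  -- formulas for Pz
  have Pz_zero : ∀ u : ℂ, Jacobi.Pz lam w u 0 = 1 := by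
    intro u
    rw [Jacobi.Pz, if_pos le_rfl]
    rw [show Finset.Icc (1 : ℤ) 0 = ∅ from Finset.Icc_eq_empty (by omega)]
    simp
  have hicc : ∀ n : ℕ, Finset.Icc (1 : ℤ) ((n : ℤ) + 1)
      = insert ((n : ℤ) + 1) (Finset.Icc 1 (n : ℤ)) := by
    intro n; ext x; simp only [Finset.mem_Icc, Finset.mem_insert]; omega
  have Pz_succ : ∀ (u : ℂ) (n : ℕ),
      Jacobi.Pz lam w u ((n : ℤ) + 1)
        = Jacobi.Pz lam w u (n : ℤ) * (w (n : ℤ) / (u - lam ((n : ℤ) + 1))) := by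
    intro u n
    rw [Jacobi.Pz, Jacobi.Pz, if_pos (by omega : (0:ℤ) ≤ (n : ℤ) + 1),
      if_pos (Int.ofNat_nonneg n), hicc n,
      Finset.prod_insert (by simp only [Finset.mem_Icc]; omega)]
    rw [mul_comm, show (n : ℤ) + 1 - 1 = (n : ℤ) by ring]
  have hicc2 : ∀ n : ℕ, Finset.Icc (-(n : ℤ) - 1) 0
      = insert (-(n : ℤ) - 1) (Finset.Icc (-(n : ℤ)) 0) := by
    intro n; ext x; simp only [Finset.mem_Icc, Finset.mem_insert]; omega
  have Pz_neg_succ : ∀ (u : ℂ) (n : ℕ),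
      Jacobi.Pz lam w u (-(n : ℤ) - 2)
        = ((u - lam (-(n : ℤ) - 1)) / w (-(n : ℤ) - 2)) * Jacobi.Pz lam w u (-(n : ℤ) - 1) := by
    intro u n
    rw [Jacobi.Pz, Jacobi.Pz, if_neg (by omega), if_neg (by omega),
      show -(n : ℤ) - 2 + 1 = -(n : ℤ) - 1 by ring,
      show -(n : ℤ) - 1 + 1 = -(n : ℤ) by ring, hicc2 n,
      Finset.prod_insert (by simp only [Finset.mem_Icc]; omega),
      show -(n : ℤ) - 1 - 1 = -(n : ℤ) - 2 by ring]
  have Pz_neg_one : ∀ u : ℂ, Jacobi.Pz lam w u (-1) = (u - lam 0) / w (-1) := by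
    intro u
    rw [Jacobi.Pz, if_neg (by omega)]
    norm_num
  have Pz_neg_ne : ∀ u ∈ Metric.closedBall z R, ∀ n : ℕ,
      Jacobi.Pz lam w u (-(n : ℤ) - 1) ≠ 0 := by
    intro u hu n
    rw [Jacobi.Pz, if_neg (by omega)]
    exact Finset.prod_ne_zero_iff.mpr fun i _ => div_ne_zero (hune u hu i) (hw _)
  -- the negative-side functions
  set Fn : ℕ → ℂ → ℂ :=
    fun n u => 1 / (w (-(n : ℤ) - 1) * Jacobi.Pz lam w u (-(n : ℤ) - 1)) with hFn
  have Fn_zero : ∀ u : ℂ, Fn 0 u = 1 / (u - lam 0) := by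
    intro u
    have h0 : Fn 0 u = 1 / (w (-(0 : ℕ) - 1 : ℤ) * Jacobi.Pz lam w u (-(0 : ℕ) - 1 : ℤ)) := rfl
    rw [h0, show (-(0 : ℕ) - 1 : ℤ) = -1 by norm_num, Pz_neg_one, mul_comm,
      div_mul_cancel₀ _ (hw (-1))]
  have Fn_succ : ∀ u ∈ Metric.closedBall z R, ∀ n : ℕ,
      Fn (n + 1) u = Fn n u * (w (-(n : ℤ) - 1) / (u - lam (-(n : ℤ) - 1))) := by
    intro u hu n
    have hc : (-(((n : ℕ) + 1 : ℕ) : ℤ) - 1) = -(n : ℤ) - 2 := by push_cast; ring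
    have e0 : Fn (n + 1) u
        = 1 / (w (-(n : ℤ) - 2) * Jacobi.Pz lam w u (-(n : ℤ) - 2)) := by
      have : Fn (n + 1) u = 1 / (w (-((n : ℕ) + 1 : ℕ) - 1 : ℤ)
          * Jacobi.Pz lam w u (-((n : ℕ) + 1 : ℕ) - 1 : ℤ)) := rfl
      rw [this, hc]
    have e1 : Fn n u = 1 / (w (-(n : ℤ) - 1) * Jacobi.Pz lam w u (-(n : ℤ) - 1)) := rfl
    have hD : w (-(n : ℤ) - 2) * Jacobi.Pz lam w u (-(n : ℤ) - 2)
        = (u - lam (-(n : ℤ) - 1)) * Jacobi.Pz lam w u (-(n : ℤ) - 1) := by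
      rw [Pz_neg_succ u n, ← mul_assoc,
        mul_comm (w (-(n : ℤ) - 2)) ((u - lam (-(n : ℤ) - 1)) / w (-(n : ℤ) - 2)),
        div_mul_cancel₀ _ (hw _)]
    rw [e0, hD, e1, div_mul_div_comm, one_mul,
      show (w (-(n : ℤ) - 1) * Jacobi.Pz lam w u (-(n : ℤ) - 1)) * (u - lam (-(n : ℤ) - 1))
          = w (-(n : ℤ) - 1) * ((u - lam (-(n : ℤ) - 1)) * Jacobi.Pz lam w u (-(n : ℤ) - 1)) by
        ring,
      div_mul_cancel_left₀ (hw _), one_div]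
  -- the inductive bounds
  set Gp : ℕ → ℝ := fun n => ∏ j ∈ Finset.range n, (C ^ 2 * t (j : ℤ)) with hGp
  set Gm : ℕ → ℝ := fun n => ∏ j ∈ Finset.range n, (C ^ 2 * t (-(j : ℤ) - 1)) with hGm
  have hGp0 : ∀ n, 0 ≤ Gp n :=
    fun n => Finset.prod_nonneg fun j _ => mul_nonneg (sq_nonneg C) (ht0 _)
  have hGm0 : ∀ n, 0 ≤ Gm n :=
    fun n => Finset.prod_nonneg fun j _ => mul_nonneg (sq_nonneg C) (ht0 _)
  have claimP : ∀ u ∈ Metric.closedBall z R, ∀ n : ℕ,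
      ‖Jacobi.Pz lam w u (n : ℤ)‖ ^ 2 * ‖lam (n : ℤ) - z₀‖ ≤ ‖lam 0 - z₀‖ * Gp n := by
    intro u hu n
    induction n with
    | zero =>
      simp only [Nat.cast_zero, Pz_zero]
      simp only [hGp, Finset.prod_range_zero]
      simp
    | succ n ih =>
      rw [show ((n + 1 : ℕ) : ℤ) = (n : ℤ) + 1 by push_cast; ring, Pz_succ u n,
        norm_mul, mul_pow, norm_div]
      have hstar' := hstar u hu (n : ℤ) ((n : ℤ) + 1) (n : ℤ) (by ring)
      calc ‖Jacobi.Pz lam w u (n : ℤ)‖ ^ 2 * (‖w (n : ℤ)‖ / ‖u - lam ((n : ℤ) + 1)‖) ^ 2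
            * ‖lam ((n : ℤ) + 1) - z₀‖
          ≤ ‖Jacobi.Pz lam w u (n : ℤ)‖ ^ 2 * (C ^ 2 * t (n : ℤ) * ‖lam (n : ℤ) - z₀‖) := by
            rw [mul_assoc]
            exact mul_le_mul_of_nonneg_left hstar' (sq_nonneg _)
        _ = (C ^ 2 * t (n : ℤ)) * (‖Jacobi.Pz lam w u (n : ℤ)‖ ^ 2 * ‖lam (n : ℤ) - z₀‖) := by
            ring
        _ ≤ (C ^ 2 * t (n : ℤ)) * (‖lam 0 - z₀‖ * Gp n) :=
            mul_le_mul_of_nonneg_left ih (mul_nonneg (sq_nonneg C) (ht0 _))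
        _ = ‖lam 0 - z₀‖ * Gp (n + 1) := by
            simp only [hGp, Finset.prod_range_succ]
            ring
  have claimM : ∀ u ∈ Metric.closedBall z R, ∀ n : ℕ,
      ‖Fn n u‖ ^ 2 * ‖lam (-(n : ℤ)) - z₀‖ ≤ (‖lam 0 - z₀‖ / R ^ 2) * Gm n := by
    intro u hu n
    induction n with
    | zero =>
      rw [Fn_zero]
      simp only [Nat.cast_zero, neg_zero, hGm, Finset.prod_range_zero]
      rw [norm_div, norm_one]
      have h1 : (1 / ‖u - lam 0‖) ^ 2 ≤ (1 / R) ^ 2 := by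
        apply pow_le_pow_left₀ (by positivity)
        exact one_div_le_one_div_of_le hR (hball u hu 0)
      calc (1 / ‖u - lam 0‖) ^ 2 * ‖lam 0 - z₀‖
          ≤ (1 / R) ^ 2 * ‖lam 0 - z₀‖ :=
            mul_le_mul_of_nonneg_right h1 (norm_nonneg _)
        _ = ‖lam 0 - z₀‖ / R ^ 2 * ∏ j ∈ Finset.range 0, (C ^ 2 * t (-(j : ℤ) - 1)) := by
            rw [Finset.prod_range_zero]
            field_simp
    | succ n ih =>
      have hnorm : ‖Fn (n + 1) u‖
          = ‖Fn n u‖ * (‖w (-(n : ℤ) - 1)‖ / ‖u - lam (-(n : ℤ) - 1)‖) := by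
        rw [Fn_succ u hu n, norm_mul,
          norm_div (w (-(n : ℤ) - 1)) (u - lam (-(n : ℤ) - 1))]
      rw [show (-((n : ℕ) + 1 : ℕ) : ℤ) = -(n : ℤ) - 1 by push_cast; ring,
        hnorm, mul_pow]
      have hstar' := hstar u hu (-(n : ℤ) - 1) (-(n : ℤ) - 1) (-(n : ℤ))
        (by rw [show -(n : ℤ) - 1 + 1 = -(n : ℤ) by ring])
      calc ‖Fn n u‖ ^ 2 * (‖w (-(n : ℤ) - 1)‖ / ‖u - lam (-(n : ℤ) - 1)‖) ^ 2
            * ‖lam (-(n : ℤ) - 1) - z₀‖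
          ≤ ‖Fn n u‖ ^ 2 * (C ^ 2 * t (-(n : ℤ) - 1) * ‖lam (-(n : ℤ)) - z₀‖) := by
            rw [mul_assoc]
            exact mul_le_mul_of_nonneg_left hstar' (sq_nonneg _)
        _ = (C ^ 2 * t (-(n : ℤ) - 1)) * (‖Fn n u‖ ^ 2 * ‖lam (-(n : ℤ)) - z₀‖) := by ring
        _ ≤ (C ^ 2 * t (-(n : ℤ) - 1)) * ((‖lam 0 - z₀‖ / R ^ 2) * Gm n) :=
            mul_le_mul_of_nonneg_left ih (mul_nonneg (sq_nonneg C) (ht0 _))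
        _ = (‖lam 0 - z₀‖ / R ^ 2) * Gm (n + 1) := by
            simp only [hGm, Finset.prod_range_succ]
            ring
  -- summable dominating sequences
  have htends : ∀ f : ℕ → ℤ, Function.Injective f →
      Tendsto (fun n : ℕ => C ^ 2 * t (f n)) atTop (𝓝 0) := by
    intro f hf
    have h1 : Tendsto t cofinite (𝓝 0) := hsum.tendsto_cofinite_zero
    have h2 : Tendsto (fun n : ℕ => t (f n)) atTop (𝓝 0) := by
      rw [← Nat.cofinite_eq_atTop]
      exact h1.comp hf.tendsto_cofinite
    simpa using h2.const_mul (C ^ 2)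
  have hsumP : Summable fun n : ℕ => Real.sqrt (‖lam 0 - z₀‖ / d₀ * Gp n) := by
    simp only [hGp]
    apply aux_summable_sqrt_prod (by positivity)
      (fun j => mul_nonneg (sq_nonneg C) (ht0 _))
    exact htends (fun j : ℕ => (j : ℤ)) fun a b h => by dsimp only at h; omega
  have hsumM : Summable fun n : ℕ => Real.sqrt (‖lam 0 - z₀‖ / R ^ 2 / d₀ * Gm n) := by
    simp only [hGm]
    apply aux_summable_sqrt_prod (by positivity)
      (fun j => mul_nonneg (sq_nonneg C) (ht0 _))
    exact htends (fun j : ℕ => -(j : ℤ) - 1) fun a b h => by dsimp only at h; omega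
  -- pointwise bounds
  have hboundP : ∀ n : ℕ, ∀ u ∈ Metric.closedBall z R,
      ‖Jacobi.Pz lam w u (n : ℤ)‖ ≤ Real.sqrt (‖lam 0 - z₀‖ / d₀ * Gp n) := by
    intro n u hu
    apply aux_le_sqrt (norm_nonneg _)
    have h1 := claimP u hu n
    have h2 : d₀ ≤ ‖lam (n : ℤ) - z₀‖ := hlamz₀ _
    have h3 : ‖Jacobi.Pz lam w u (n : ℤ)‖ ^ 2 * d₀ ≤ ‖lam 0 - z₀‖ * Gp n :=
      le_trans (mul_le_mul_of_nonneg_left h2 (sq_nonneg _)) h1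
    rw [div_mul_eq_mul_div, le_div_iff₀ hd₀]
    exact h3
  have hboundM : ∀ n : ℕ, ∀ u ∈ Metric.closedBall z R,
      ‖Fn n u‖ ≤ Real.sqrt (‖lam 0 - z₀‖ / R ^ 2 / d₀ * Gm n) := by
    intro n u hu
    apply aux_le_sqrt (norm_nonneg _)
    have h1 := claimM u hu n
    have h2 : d₀ ≤ ‖lam (-(n : ℤ)) - z₀‖ := hlamz₀ _
    have h3 : ‖Fn n u‖ ^ 2 * d₀ ≤ ‖lam 0 - z₀‖ / R ^ 2 * Gm n :=
      le_trans (mul_le_mul_of_nonneg_left h2 (sq_nonneg _)) h1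
    rw [div_mul_eq_mul_div, le_div_iff₀ hd₀]
    exact h3
  -- differentiability
  have hdiffP : ∀ n : ℕ, DifferentiableOn ℂ (fun u => Jacobi.Pz lam w u (n : ℤ))
      (Metric.closedBall z R) := by
    intro n u hu
    apply DifferentiableAt.differentiableWithinAt
    have hform : (fun u : ℂ => Jacobi.Pz lam w u (n : ℤ))
        = fun u => ∏ j ∈ Finset.Icc (1 : ℤ) (n : ℤ), w (j - 1) / (u - lam j) := by
      funext v
      rw [Jacobi.Pz, if_pos (Int.ofNat_nonneg n)]
    rw [hform]
    apply DifferentiableAt.fun_finsetProd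
    intro i _
    exact (differentiableAt_const _).div (differentiableAt_id.sub_const _) (hune u hu i)
  have hdiffM : ∀ n : ℕ, DifferentiableOn ℂ (Fn n) (Metric.closedBall z R) := by
    intro n u hu
    apply DifferentiableAt.differentiableWithinAt
    rw [hFn]
    simp only
    have hPdiff : DifferentiableAt ℂ (fun v : ℂ => Jacobi.Pz lam w v (-(n : ℤ) - 1)) u := by
      have hform : (fun v : ℂ => Jacobi.Pz lam w v (-(n : ℤ) - 1))
          = fun v => ∏ j ∈ Finset.Icc (-(n : ℤ) - 1 + 1) (0 : ℤ), (v - lam j) / w (j - 1) := by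
        funext v
        rw [Jacobi.Pz, if_neg (by omega)]
      rw [hform]
      apply DifferentiableAt.fun_finsetProd
      intro i _
      exact (differentiableAt_id.sub_const _).div_const _
    exact (differentiableAt_const _).div ((differentiableAt_const _).mul hPdiff)
      (mul_ne_zero (hw _) (Pz_neg_ne u hu n))
  constructor
  · exact aux_summable_iteratedDeriv hR hdiffP hsumP hboundP k
  · exact aux_summable_iteratedDeriv hR hdiffM hsumM hboundM k

end
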